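/- In the hard-label estimation setting, suppose there exists a constant c > 0 such that |η(x) − 1/2| ≥ c holds P_X-almost surely. Then for any δ ∈ (0,1), with probability at least 1−δ, |β̂(η̂_{1:n}) − β*| ≤ √(log(2/δ)/(2n)) + (1−4c²)/(8cm), where β̂(η̂_{1:n}) = (1/n)∑_{i=1}^n min{η̂_i, 1−η̂_i}, each η̂_i is the average of m conditionally independent Bernoulli(η(x_i)) labels given i.i.d. x_i ∼ P_X, and β* = E_{x∼P_X}[min{η(x), 1−η(x)}] is the Bayes error. -/

import Mathlib

open MeasureTheory ProbabilityTheory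
open Real

section Analytic

private lemma mono_aux' {F F' : ℝ → ℝ} (h : ∀ s, HasDerivAt F (F' s) s)
    (h0 : ∀ s, 0 ≤ s → 0 ≤ F' s) {s : ℝ} (hs : 0 ≤ s) : F 0 ≤ F s := by
  have hmono : MonotoneOn F (Set.Ici 0) := by
    refine monotoneOn_of_deriv_nonneg (convex_Ici 0)
      (fun x _ => (h x).differentiableAt.continuousAt.continuousWithinAt)
      (fun x hx => (h x).differentiableAt.differentiableWithinAt) ?_
    intro x hx
    rw [(h x).deriv]
    exact h0 x (le_of_lt (by simpa using hx))
  exact hmono (Set.self_mem_Ici) hs hs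

private lemma exp_quadratic' {v : ℝ} (hv : 0 ≤ v) : 1 + v + v ^ 2 / 2 ≤ exp v := by
  have h := mono_aux' (F := fun v => exp v - 1 - v - v ^ 2 / 2)
    (F' := fun v => exp v - 1 - v) (fun s => by
      have h1 : HasDerivAt (fun v : ℝ => exp v) (exp s) s := Real.hasDerivAt_exp s
      have h2 : HasDerivAt (fun v : ℝ => v ^ 2 / 2) s s := by
        simpa using ((hasDerivAt_pow 2 s).div_const 2)
      exact ((h1.sub_const 1).sub (hasDerivAt_id' s)).sub h2)
    (fun s hs => by
      show 0 ≤ exp s - 1 - s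
      nlinarith [Real.add_one_le_exp s]) hv
  simp at h
  nlinarith [h]

private lemma exp_le_one_add_add' (u : ℝ) : exp u ≤ 1 + u + u ^ 2 / 2 * exp |u| := by
  rcases le_or_gt 0 u with hu | hu
  · rw [abs_of_nonneg hu]
    have h := mono_aux' (F := fun u => u ^ 2 / 2 * exp u - (exp u - 1 - u))
      (F' := fun u => (u * exp u + u ^ 2 / 2 * exp u) - (exp u - 1)) (fun s => by
        have h1 : HasDerivAt (fun u : ℝ => u ^ 2 / 2) s s := by
          simpa using ((hasDerivAt_pow 2 s).div_const 2)
        have h2 : HasDerivAt (fun u : ℝ => u ^ 2 / 2 * exp u)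
            (s * exp s + s ^ 2 / 2 * exp s) s := by
          exact h1.mul (Real.hasDerivAt_exp s)
        exact h2.sub (((Real.hasDerivAt_exp s).sub_const 1).sub (hasDerivAt_id' s)))
      (fun s hs => by
        have h1 : exp s * (1 - s) ≤ 1 := by
          have := Real.add_one_le_exp (-s)
          have h2 := Real.exp_pos s
          have h3 : exp s * exp (-s) = 1 := by
            rw [← Real.exp_add]; simp
          nlinarith
        nlinarith [Real.exp_pos s, sq_nonneg s,
          mul_nonneg (mul_nonneg hs hs) (Real.exp_pos s).le]) hu
    simp at h
    nlinarith
  · have habs : |u| = -u := abs_of_neg hu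
    rw [habs]
    have h1 : exp u ≤ 1 + u + u ^ 2 / 2 := by
      have hv : 0 ≤ -u := by linarith
      have h2 := exp_quadratic' hv
      have h3 : exp u * exp (-u) = 1 := by rw [← Real.exp_add]; simp
      have h4 : (1 + u + u ^ 2 / 2) * (1 + -u + (-u) ^ 2 / 2) = 1 + u ^ 4 / 4 := by ring
      have h5 : 0 < 1 + u + u ^ 2 / 2 := by nlinarith
      nlinarith [Real.exp_pos u, Real.exp_pos (-u)]
    have : (1 : ℝ) ≤ exp (-u) := by
      rw [Real.one_le_exp_iff]; linarith
    nlinarith [sq_nonneg u]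

private lemma key_mgf_ineq' {s : ℝ} (hs : 0 ≤ s) :
    1 + s ^ 2 / 8 * exp s ≤ exp (s ^ 2 / 2) := by
  have h := mono_aux' (F := fun s => exp (s ^ 2 / 2) - 1 - s ^ 2 / 8 * exp s)
    (F' := fun s => s * exp (s ^ 2 / 2) - (s / 4 * exp s + s ^ 2 / 8 * exp s)) (fun t => by
      have h1 : HasDerivAt (fun s : ℝ => s ^ 2 / 2) t t := by
        simpa using ((hasDerivAt_pow 2 t).div_const 2)
      have h2 : HasDerivAt (fun s : ℝ => exp (s ^ 2 / 2)) (exp (t ^ 2 / 2) * t) t :=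
        (Real.hasDerivAt_exp _).comp t h1 |>.congr_deriv rfl
      have h3 : HasDerivAt (fun s : ℝ => s ^ 2 / 8) (t / 4) t := by
        have := (hasDerivAt_pow 2 t).div_const 8
        simpa using this.congr_deriv (by ring)
      have h4 : HasDerivAt (fun s : ℝ => s ^ 2 / 8 * exp s)
          (t / 4 * exp t + t ^ 2 / 8 * exp t) t := h3.mul (Real.hasDerivAt_exp t)
      have := (h2.sub_const 1).sub h4
      refine this.congr_deriv (by ring))
    (fun t ht => by
      have hsplit : exp (t ^ 2 / 2) = exp t * exp (t * (t - 2) / 2) := by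
        rw [← Real.exp_add]; ring_nf
      have h1 : 1 + t * (t - 2) / 2 ≤ exp (t * (t - 2) / 2) := by
        have := Real.add_one_le_exp (t * (t - 2) / 2); linarith
      have h2 : (2 + t) / 8 ≤ 1 + t * (t - 2) / 2 := by nlinarith [sq_nonneg (t - 9/8)]
      have h3 := Real.exp_pos t
      have : t * ((2 + t) / 8 * exp t) ≤ t * exp (t ^ 2 / 2) := by
        rw [hsplit]
        have : (2 + t) / 8 * exp t ≤ exp t * exp (t * (t - 2) / 2) := by
          have := (Real.exp_pos (t * (t - 2) / 2))
          nlinarith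
        exact mul_le_mul_of_nonneg_left this ht
      nlinarith) hs
  simp at h
  nlinarith

private lemma min_eq_half_sub_abs' (a : ℝ) : min a (1 - a) = 1 / 2 - |a - 1 / 2| := by
  rcases le_total a (1 / 2) with h | h
  · rw [min_eq_left (by linarith), abs_of_nonpos (by linarith)]; ring
  · rw [min_eq_right (by linarith), abs_of_nonneg (by linarith)]; ring

private lemma abs_half_bound' {p z c : ℝ} (hc : 0 < c) (hsep : c ≤ |p - 1 / 2|) :
    |z - 1 / 2| ≤ |p - 1 / 2| + (if 1 / 2 ≤ p then (1 : ℝ) else -1) * (z - p)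
      + (z - p) ^ 2 / (2 * c) := by
  have h2c : 0 < 2 * c := by linarith
  have goal2 : (|z - 1/2| - (|p - 1/2| + (if 1/2 ≤ p then (1:ℝ) else -1) * (z - p))) * (2 * c)
      ≤ (z - p) ^ 2 := by
    rcases le_or_gt (1/2) p with hp | hp
    · rw [if_pos hp, abs_of_nonneg (by linarith : (0:ℝ) ≤ p - 1/2)]
      have hcp : c ≤ p - 1/2 := by rwa [abs_of_nonneg (by linarith)] at hsep
      rcases le_or_gt (1/2) z with hz | hz
      · rw [abs_of_nonneg (by linarith : (0:ℝ) ≤ z - 1/2)]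
        nlinarith [sq_nonneg (z - p)]
      · rw [abs_of_neg (by linarith : z - 1/2 < 0)]
        nlinarith [sq_nonneg (c - (1/2 - z)), sq_nonneg (p - 1/2 - c)]
    · rw [if_neg (not_le.mpr hp), abs_of_neg (by linarith : p - 1/2 < 0)]
      have hcp : c ≤ 1/2 - p := by
        rwa [abs_of_neg (by linarith : p - 1/2 < 0), neg_sub] at hsep
      rcases le_or_gt (1/2) z with hz | hz
      · rw [abs_of_nonneg (by linarith : (0:ℝ) ≤ z - 1/2)]
        nlinarith [sq_nonneg (c - (z - 1/2)), sq_nonneg (1/2 - p - c)]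
      · rw [abs_of_neg (by linarith : z - 1/2 < 0)]
        nlinarith [sq_nonneg (z - p)]
  have h3 := (le_div_iff₀ h2c).mpr goal2
  linarith

end Analytic

section ProbInfra

private lemma integrable_of_bdd' {Ω : Type*} [MeasurableSpace Ω] {ρ : Measure Ω}
    [IsFiniteMeasure ρ] {f : Ω → ℝ} (hf : Measurable f) (C : ℝ) (hC : ∀ ω, |f ω| ≤ C) :
    Integrable f ρ :=
  ⟨hf.aestronglyMeasurable, HasFiniteIntegral.of_bounded (C := C) (ae_of_all _ hC)⟩

variable {ι : Type*} [Fintype ι] {α : ι → Type*} [∀ i, MeasurableSpace (α i)]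
  (μs : ∀ i, Measure (α i)) [∀ i, IsProbabilityMeasure (μs i)]

private lemma pi_inter_preimage' (S : Finset ι) (sets : ∀ i, Set (α i)) :
    Measure.pi μs (⋂ i ∈ S, (fun ω => ω i) ⁻¹' sets i) = ∏ i ∈ S, μs i (sets i) := by
  classical
  have h1 : (⋂ i ∈ S, (fun ω : ∀ i, α i => ω i) ⁻¹' sets i) =
      Set.pi Set.univ (fun i => if i ∈ S then sets i else Set.univ) := by
    ext ω
    simp only [Set.mem_iInter, Set.mem_preimage, Set.mem_pi, Set.mem_univ, true_imp_iff]
    constructor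
    · intro h i; split_ifs with hi
      · exact h i hi
      · trivial
    · intro h i hi; have := h i; rwa [if_pos hi] at this
  rw [h1, Measure.pi_pi]
  calc (∏ i : ι, μs i (if i ∈ S then sets i else Set.univ))
      = ∏ i : ι, (if i ∈ S then μs i (sets i) else 1) := by
        refine Finset.prod_congr rfl fun i _ => ?_
        split_ifs with hi <;> simp
    _ = ∏ i ∈ S, μs i (sets i) := by
        rw [Finset.prod_ite_mem Finset.univ S fun i => μs i (sets i), Finset.univ_inter]

private lemma iIndepFun_eval_pi' :
    iIndepFun (fun (i : ι) (ω : ∀ i, α i) => ω i) (Measure.pi μs) := by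
  rw [iIndepFun_iff_measure_inter_preimage_eq_mul]
  intro S sets _
  rw [pi_inter_preimage' μs S sets]
  refine Finset.prod_congr rfl fun i _ => ?_
  have := pi_inter_preimage' μs {i} sets
  simpa using this.symm

private lemma map_eval_pi' (i : ι) : Measure.map (fun ω => ω i) (Measure.pi μs) = μs i := by
  classical
  ext s hs
  rw [Measure.map_apply (measurable_pi_apply i) hs]
  have := pi_inter_preimage' μs {i} (fun j => if h : j = i then h ▸ s else Set.univ)
  simpa using this

private lemma integral_eval_pi' {i : ι} {f : α i → ℝ} (hf : AEStronglyMeasurable f (μs i)) :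
    ∫ ω, f (ω i) ∂(Measure.pi μs) = ∫ x, f x ∂(μs i) := by
  rw [← map_eval_pi' μs i, integral_map (measurable_pi_apply i).aemeasurable]
  rw [map_eval_pi' μs i]; exact hf

end ProbInfra

section Bernoulli

private noncomputable def berM' (p : ℝ) (hp1 : p ≤ 1) : Measure Bool :=
  (PMF.bernoulli (Real.toNNReal p) (Real.toNNReal_le_one.mpr hp1)).toMeasure

instance berM'_prob (p : ℝ) (hp1 : p ≤ 1) : IsProbabilityMeasure (berM' p hp1) :=
  PMF.toMeasure.isProbabilityMeasure _

private lemma bernoulli_integral' {p : ℝ} (hp0 : 0 ≤ p) (hp1 : p ≤ 1) (f : Bool → ℝ) :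
    ∫ b, f b ∂(berM' p hp1) = p * f true + (1 - p) * f false := by
  rw [integral_fintype (integrable_of_bdd' (measurable_of_countable f)
    (max |f true| |f false|) (fun b => by cases b <;> simp [le_max_left, le_max_right]))]
  have htrue : berM' p hp1 {true} = ENNReal.ofReal p := by
    rw [berM', PMF.toMeasure_apply_singleton _ _ (measurableSet_singleton _),
      PMF.bernoulli_apply]
    rfl
  have hfalse : berM' p hp1 {false} = 1 - ENNReal.ofReal p := by
    rw [berM', PMF.toMeasure_apply_singleton _ _ (measurableSet_singleton _),
      PMF.bernoulli_apply]
    rfl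
  have h1 : (berM' p hp1).real {true} = p := by rw [Measure.real, htrue, ENNReal.toReal_ofReal hp0]
  have h2 : (berM' p hp1).real {false} = 1 - p := by
    rw [Measure.real, hfalse, ENNReal.toReal_sub_of_le (ENNReal.ofReal_le_one.mpr hp1) ENNReal.one_ne_top]
    rw [ENNReal.toReal_one, ENNReal.toReal_ofReal hp0]
  rw [Fintype.sum_bool]
  rw [h1, h2]
  simp only [smul_eq_mul]

end Bernoulli

section Binomial

variable {m : ℕ} {p : ℝ}

private noncomputable def yb' (p : ℝ) : Bool → ℝ := fun y => (if y then 1 else 0) - p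

private lemma yb'_meas : Measurable (yb' p) := measurable_of_countable _

private noncomputable def Ym' (p : ℝ) (j : Fin m) : (Fin m → Bool) → ℝ := fun b => yb' p (b j)

private lemma Ym'_meas (j : Fin m) : Measurable (Ym' p j) :=
  yb'_meas.comp (measurable_pi_apply j)

private lemma Ym'_bdd (j : Fin m) (b : Fin m → Bool) : |Ym' p j b| ≤ 1 + |p| := by
  simp only [Ym', yb']
  have h1 : |(if b j then (1:ℝ) else 0) - p| ≤ |if b j then (1:ℝ) else 0| + |p| :=
    abs_sub _ _
  have h2 : |if b j then (1:ℝ) else 0| ≤ 1 := by split_ifs <;> simp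
  linarith

private noncomputable def piB' (m : ℕ) (p : ℝ) (hp1 : p ≤ 1) : Measure (Fin m → Bool) :=
  Measure.pi (fun _ : Fin m => berM' p hp1)

instance piB'_prob (m : ℕ) (p : ℝ) (hp1 : p ≤ 1) : IsProbabilityMeasure (piB' m p hp1) := by
  unfold piB'; infer_instance

variable (hp0 : 0 ≤ p) (hp1 : p ≤ 1)

private lemma Ym'_integrable (j : Fin m) : Integrable (Ym' p j) (piB' m p hp1) :=
  integrable_of_bdd' (Ym'_meas j) (1 + |p|) (Ym'_bdd j)

include hp0 in
private lemma Ym'_int_zero (j : Fin m) : ∫ b, Ym' p j b ∂(piB' m p hp1) = 0 := by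
  have h := integral_eval_pi' (fun _ : Fin m => berM' p hp1) (i := j)
    (f := yb' p) (yb'_meas (p := p)).aestronglyMeasurable
  rw [piB']
  simp only [Ym']
  rw [h, bernoulli_integral' hp0 hp1]
  simp [yb']; ring

include hp0 in
private lemma Ym'_sq_int (j : Fin m) :
    ∫ b, (Ym' p j b) ^ 2 ∂(piB' m p hp1) = p * (1 - p) := by
  have h := integral_eval_pi' (fun _ : Fin m => berM' p hp1) (i := j)
    (f := fun y => (yb' p y) ^ 2) ((yb'_meas (p := p)).pow_const 2).aestronglyMeasurable
  rw [piB']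
  simp only [Ym']
  rw [h, bernoulli_integral' hp0 hp1]
  simp [yb']; ring

include hp0 in
private lemma Ym'_cross {j k : Fin m} (hjk : j ≠ k) :
    ∫ b, Ym' p j b * Ym' p k b ∂(piB' m p hp1) = 0 := by
  have hind : IndepFun (Ym' p j) (Ym' p k) (piB' m p hp1) := by
    have := (iIndepFun_eval_pi' (fun _ : Fin m => berM' p hp1)).indepFun hjk
    exact this.comp (yb'_meas (p := p)) (yb'_meas (p := p))
  have h := hind.integral_mul_eq_mul_integral (Ym'_integrable hp1 j).aestronglyMeasurable (Ym'_integrable hp1 k).aestronglyMeasurable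
  have h2 : ∫ b, Ym' p j b * Ym' p k b ∂(piB' m p hp1)
      = ∫ b, (Ym' p j * Ym' p k) b ∂(piB' m p hp1) := rfl
  rw [h2, h, Ym'_int_zero hp0 hp1 j]
  simp

include hp0 in
private lemma sum_Ym'_sq_int :
    ∫ b, (∑ j, Ym' p j b) ^ 2 ∂(piB' m p hp1) = m * (p * (1 - p)) := by
  classical
  have hint : ∀ j k : Fin m, Integrable (fun b => Ym' p j b * Ym' p k b) (piB' m p hp1) := by
    intro j k
    refine integrable_of_bdd' ((Ym'_meas j).mul (Ym'_meas k)) ((1 + |p|) * (1 + |p|)) fun b => ?_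
    rw [abs_mul]
    exact mul_le_mul (Ym'_bdd j b) (Ym'_bdd k b) (abs_nonneg _) (by positivity)
  have hexp : ∀ b : Fin m → Bool, (∑ j, Ym' p j b) ^ 2 = ∑ j, ∑ k, Ym' p j b * Ym' p k b := by
    intro b
    rw [sq, Finset.sum_mul_sum]
  simp_rw [hexp]
  rw [integral_finset_sum _ (fun j _ => integrable_finset_sum _ (fun k _ => hint j k))]
  have hrow : ∀ j : Fin m, ∫ b, ∑ k, Ym' p j b * Ym' p k b ∂(piB' m p hp1) = p * (1 - p) := by
    intro j
    rw [integral_finset_sum _ (fun k _ => hint j k)]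
    rw [Finset.sum_eq_single j]
    · rw [show (fun b => Ym' p j b * Ym' p j b) = fun b => (Ym' p j b) ^ 2 by funext b; ring]
      exact Ym'_sq_int hp0 hp1 j
    · intro k _ hkj; exact Ym'_cross hp0 hp1 (Ne.symm hkj)
    · intro h; exact absurd (Finset.mem_univ j) h
  simp_rw [hrow]
  simp [mul_comm]

end Binomial
section BiasBound

private lemma bias_bound {m : ℕ} (hm : 0 < m) {p c : ℝ} (hp0 : 0 ≤ p) (hp1 : p ≤ 1)
    (hc : 0 < c) (hsep : c ≤ |p - 1 / 2|) :
    |(∫ b : Fin m → Bool, min ((∑ j, if b j then (1:ℝ) else 0) / m)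
        (1 - (∑ j, if b j then (1:ℝ) else 0) / m) ∂(piB' m p hp1)) - min p (1 - p)|
      ≤ (1 - 4 * c ^ 2) / (8 * c * m) := by
  classical
  have hmR : (0:ℝ) < m := Nat.cast_pos.mpr hm
  set g : (Fin m → Bool) → ℝ := fun b => (∑ j, if b j then (1:ℝ) else 0) / m with hg_def
  have hgY : ∀ b, g b - p = (∑ j, Ym' p j b) / m := by
    intro b
    simp only [hg_def, Ym', yb', Finset.sum_sub_distrib, Finset.sum_const, Finset.card_univ,
      Fintype.card_fin, nsmul_eq_mul]
    field_simp
  have hg_meas : Measurable g := by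
    apply Measurable.div_const
    exact Finset.measurable_sum _ fun j _ =>
      (measurable_of_countable (fun y : Bool => if y then (1:ℝ) else 0)).comp
        (measurable_pi_apply j)
  have hg01 : ∀ b, 0 ≤ g b ∧ g b ≤ 1 := by
    intro b
    constructor
    · apply div_nonneg _ hmR.le
      apply Finset.sum_nonneg
      intro j _; split_ifs <;> norm_num
    · rw [div_le_one hmR]
      calc (∑ j, if b j then (1:ℝ) else 0) ≤ ∑ _j : Fin m, (1:ℝ) := by
            apply Finset.sum_le_sum; intro j _; split_ifs <;> norm_num
        _ = m := by simp
  have hg_bdd : ∀ b, |g b| ≤ 1 := fun b => abs_le.mpr ⟨by linarith [(hg01 b).1], (hg01 b).2⟩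
  have hg_int : Integrable g (piB' m p hp1) := integrable_of_bdd' hg_meas 1 hg_bdd
  have hgp_int : Integrable (fun b => g b - p) (piB' m p hp1) := hg_int.sub (integrable_const p)
  have hmean0 : ∫ b, (g b - p) ∂(piB' m p hp1) = 0 := by
    simp_rw [hgY]
    rw [integral_div, integral_finset_sum _ fun j _ => Ym'_integrable hp1 j]
    simp [Ym'_int_zero hp0 hp1]
  have hmean : ∫ b, g b ∂(piB' m p hp1) = p := by
    have h := integral_sub hg_int (integrable_const p)
    rw [hmean0] at h
    simp [integral_const] at h
    linarith
  have hvar : ∫ b, (g b - p) ^ 2 ∂(piB' m p hp1) = p * (1 - p) / m := by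
    have he : ∀ b, (g b - p) ^ 2 = (∑ j, Ym' p j b) ^ 2 / ((m:ℝ)^2) := by
      intro b; rw [hgY, div_pow]
    simp_rw [he]
    rw [integral_div, sum_Ym'_sq_int hp0 hp1]
    field_simp
  set A := ∫ b, |g b - 1/2| ∂(piB' m p hp1) with hA_def
  have habs_int : Integrable (fun b => |g b - 1/2|) (piB' m p hp1) :=
    integrable_of_bdd' ((hg_meas.sub_const _).abs) (3/2) (fun b => by
      rw [abs_abs]
      have h1 : |g b - 1/2| ≤ |g b| + |(1:ℝ)/2| := abs_sub _ _
      have h2 : |(1:ℝ)/2| = 1/2 := by norm_num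
      linarith [hg_bdd b])
  have hI : ∫ b, min (g b) (1 - g b) ∂(piB' m p hp1) = 1/2 - A := by
    have he : ∀ b, min (g b) (1 - g b) = 1/2 - |g b - 1/2| :=
      fun b => min_eq_half_sub_abs' (g b)
    simp_rw [he]
    rw [integral_sub (integrable_const _) habs_int]
    simp [hA_def]
  have hA_low : |p - 1/2| ≤ A := by
    have h1 : |∫ b, (g b - 1/2) ∂(piB' m p hp1)| ≤ A := by
      have h0 := norm_integral_le_integral_norm (μ := piB' m p hp1) (fun b => g b - 1/2)
      simpa [Real.norm_eq_abs, hA_def] using h0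
    rwa [integral_sub hg_int (integrable_const _), hmean, integral_const,
      probReal_univ, one_smul] at h1
  set s : ℝ := if 1/2 ≤ p then (1:ℝ) else -1 with hs_def
  have hsq_int : Integrable (fun b => (g b - p)^2 / (2*c)) (piB' m p hp1) := by
    refine integrable_of_bdd' (((hg_meas.sub_const p).pow_const 2).div_const (2*c))
      (4 / (2*c)) (fun b => ?_)
    have h1 : |g b - p| ≤ 2 := by
      have := abs_sub (g b) p
      have hpb : |p| ≤ 1 := abs_le.mpr ⟨by linarith, hp1⟩
      linarith [hg_bdd b]
    have h2 : (g b - p)^2 ≤ 4 := by nlinarith [abs_nonneg (g b - p), sq_abs (g b - p)]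
    rw [abs_div, abs_of_nonneg (sq_nonneg _), abs_of_nonneg (by linarith : (0:ℝ) ≤ 2*c)]
    apply div_le_div_of_nonneg_right h2 (by linarith) |>.trans_eq rfl
  have hlin_int : Integrable (fun b => |p - 1/2| + s * (g b - p)) (piB' m p hp1) :=
    (integrable_const _).add (hgp_int.const_mul s)
  have hA_up : A ≤ |p - 1/2| + p * (1 - p) / m / (2 * c) := by
    have hpt : ∀ b, |g b - 1/2| ≤ |p - 1/2| + s * (g b - p) + (g b - p)^2 / (2*c) :=
      fun b => abs_half_bound' hc hsep
    have hrhs_int : Integrable (fun b => |p - 1/2| + s * (g b - p) + (g b - p)^2 / (2*c))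
        (piB' m p hp1) := hlin_int.add hsq_int
    have h2 := integral_mono habs_int hrhs_int hpt
    rw [hA_def]
    refine h2.trans ?_
    rw [integral_add hlin_int hsq_int, integral_add (integrable_const _) (hgp_int.const_mul s),
      integral_const, probReal_univ, one_smul,
      integral_const_mul, hmean0, integral_div, hvar]
    simp
  rw [hI, min_eq_half_sub_abs' p]
  have hpq : p * (1 - p) ≤ 1/4 - c^2 := by
    have h1 : c^2 ≤ |p - 1/2|^2 := by
      have := mul_self_le_mul_self hc.le hsep
      simpa [sq] using this
    rw [sq_abs] at h1
    nlinarith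
  have hfinal : p * (1 - p) / m / (2 * c) ≤ (1 - 4 * c ^ 2) / (8 * c * m) := by
    rw [div_div, div_le_div_iff₀ (by positivity) (by positivity)]
    nlinarith [mul_le_mul_of_nonneg_right hpq (by positivity : (0:ℝ) ≤ 8*c*m),
      mul_pos hmR hc]
  have heq : (1/2 - A) - (1/2 - |p - 1/2|) = -(A - |p - 1/2|) := by ring
  rw [heq, abs_neg, abs_of_nonneg (by linarith)]
  linarith

end BiasBound

section MgfBound

private lemma mgf_bound {Ω : Type*} [MeasurableSpace Ω] (ρ : Measure Ω) [IsProbabilityMeasure ρ]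
    {W : Ω → ℝ} (hW : Measurable W) (h0 : ∀ ω, 0 ≤ W ω) (h2 : ∀ ω, W ω ≤ 1 / 2) (t : ℝ) :
    mgf (fun ω => W ω - ∫ ω', W ω' ∂ρ) ρ t ≤ exp (t ^ 2 / 8) := by
  set q := ∫ ω', W ω' ∂ρ with hq_def
  have hW_int : Integrable W ρ := integrable_of_bdd' hW (1/2)
    (fun ω => abs_le.mpr ⟨by linarith [h0 ω], h2 ω⟩)
  have hq0 : 0 ≤ q := integral_nonneg h0
  have hq2 : q ≤ 1/2 := by
    have := integral_mono hW_int (integrable_const (1/2 : ℝ)) h2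
    simpa using this
  have hV_bdd : ∀ ω, |W ω - q| ≤ 1/2 := by
    intro ω
    rw [abs_le]
    constructor <;> [linarith [h0 ω]; linarith [h2 ω]]
  have hV_int : Integrable (fun ω => W ω - q) ρ := hW_int.sub (integrable_const q)
  have hV_mean : ∫ ω, (W ω - q) ∂ρ = 0 := by
    rw [integral_sub hW_int (integrable_const q), integral_const, probReal_univ,
      one_smul, hq_def, sub_self]
  have hVsq_int : Integrable (fun ω => (W ω - q)^2) ρ :=
    integrable_of_bdd' ((hW.sub_const q).pow_const 2) (1/4) (fun ω => by
      rw [abs_of_nonneg (sq_nonneg _)]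
      nlinarith [hV_bdd ω, abs_nonneg (W ω - q), sq_abs (W ω - q)])
  have hVsq : ∫ ω, (W ω - q)^2 ∂ρ ≤ 1/16 := by
    have hWsq_int : Integrable (fun ω => (W ω)^2) ρ :=
      integrable_of_bdd' (hW.pow_const 2) (1/4) (fun ω => by
        rw [abs_of_nonneg (sq_nonneg _)]
        nlinarith [h0 ω, h2 ω])
    have hWsq_le : ∫ ω, (W ω)^2 ∂ρ ≤ q / 2 := by
      have hptw : ∀ ω, (W ω)^2 ≤ W ω / 2 := fun ω => by nlinarith [h0 ω, h2 ω]
      have := integral_mono hWsq_int (hW_int.div_const 2) hptw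
      rwa [integral_div] at this
    have hexpand : ∫ ω, (W ω - q)^2 ∂ρ = ∫ ω, (W ω)^2 ∂ρ - q^2 := by
      have he : ∀ ω, (W ω - q)^2 = (W ω)^2 - 2*q*(W ω) + q^2 := fun ω => by ring
      simp_rw [he]
      have hint1 : Integrable (fun ω => W ω ^ 2 - 2*q*W ω) ρ :=
        hWsq_int.sub (hW_int.const_mul (2*q))
      have hint2 : Integrable (fun ω => 2*q*W ω) ρ := hW_int.const_mul (2*q)
      rw [integral_add hint1 (integrable_const _),
        integral_sub hWsq_int hint2, integral_const_mul,
        integral_const, probReal_univ, one_smul, ← hq_def]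
      ring
    rw [hexpand]
    nlinarith [sq_nonneg (q - 1/4)]
  -- pointwise bound on exp
  have hptw : ∀ ω, exp (t * (W ω - q)) ≤
      1 + t * (W ω - q) + t^2 / 2 * exp (|t|/2) * (W ω - q)^2 := by
    intro ω
    have h1 := exp_le_one_add_add' (t * (W ω - q))
    have h2' : |t * (W ω - q)| ≤ |t| / 2 := by
      rw [abs_mul]
      calc |t| * |W ω - q| ≤ |t| * (1/2) := by
            exact mul_le_mul_of_nonneg_left (hV_bdd ω) (abs_nonneg t)
        _ = |t| / 2 := by ring
    have h3 : exp |t * (W ω - q)| ≤ exp (|t|/2) := exp_le_exp.mpr h2'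
    have h4 : (t * (W ω - q))^2 / 2 * exp |t * (W ω - q)| ≤
        (t * (W ω - q))^2 / 2 * exp (|t|/2) := by
      exact mul_le_mul_of_nonneg_left h3 (by positivity)
    calc exp (t * (W ω - q)) ≤ 1 + t * (W ω - q) + (t * (W ω - q))^2 / 2 * exp |t * (W ω - q)| := h1
      _ ≤ 1 + t * (W ω - q) + (t * (W ω - q))^2 / 2 * exp (|t|/2) := by linarith
      _ = 1 + t * (W ω - q) + t^2 / 2 * exp (|t|/2) * (W ω - q)^2 := by ring
  have hexp_int : Integrable (fun ω => exp (t * (W ω - q))) ρ :=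
    integrable_of_bdd' (((hW.sub_const q).const_mul t).exp) (exp (|t|/2)) (fun ω => by
      rw [abs_of_nonneg (exp_nonneg _)]
      apply exp_le_exp.mpr
      calc t * (W ω - q) ≤ |t * (W ω - q)| := le_abs_self _
        _ ≤ |t| / 2 := by
            rw [abs_mul]
            calc |t| * |W ω - q| ≤ |t| * (1/2) :=
                  mul_le_mul_of_nonneg_left (hV_bdd ω) (abs_nonneg t)
              _ = |t| / 2 := by ring)
  have hrhs_int : Integrable
      (fun ω => 1 + t * (W ω - q) + t^2 / 2 * exp (|t|/2) * (W ω - q)^2) ρ :=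
    ((integrable_const _).add (hV_int.const_mul t)).add (hVsq_int.const_mul _)
  have hmgf : mgf (fun ω => W ω - q) ρ t ≤ 1 + t^2 / 2 * exp (|t|/2) * (1/16) := by
    rw [mgf]
    have h5 := integral_mono hexp_int hrhs_int hptw
    refine h5.trans ?_
    have hint3 : Integrable (fun ω => 1 + t * (W ω - q)) ρ :=
      (integrable_const _).add (hV_int.const_mul t)
    have hint4 : Integrable (fun ω => t ^ 2 / 2 * exp (|t|/2) * (W ω - q) ^ 2) ρ :=
      hVsq_int.const_mul _
    have hint5 : Integrable (fun ω => t * (W ω - q)) ρ := hV_int.const_mul t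
    rw [integral_add hint3 hint4,
      integral_add (integrable_const _) hint5,
      integral_const, probReal_univ, one_smul,
      integral_const_mul, integral_const_mul, hV_mean]
    have h6 := mul_le_mul_of_nonneg_left hVsq (by positivity : (0:ℝ) ≤ t^2/2 * exp (|t|/2))
    linarith
  refine hmgf.trans ?_
  have hkey := key_mgf_ineq' (s := |t|/2) (by positivity)
  have hs1 : (|t|/2)^2 = t^2/4 := by rw [div_pow, sq_abs]; norm_num
  rw [hs1] at hkey
  have : t^2/4/8 = t^2/32 := by ring
  rw [this] at hkey
  have h7 : t^2/4/2 = t^2/8 := by ring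
  rw [h7] at hkey
  have h8 : t^2 / 2 * exp (|t|/2) * (1/16) = t^2/32 * exp (|t|/2) := by ring
  rw [h8]
  exact hkey

end MgfBound
theorem consistency_hard_label_separated
    {X : Type*} [MeasurableSpace X]
    (μ : Measure X) [IsProbabilityMeasure μ]
    (η : X → ℝ) (hη : Measurable η)
    (hη01 : ∀ x, η x ∈ Set.Icc (0 : ℝ) 1)
    (n m : ℕ) (hn : 0 < n) (hm : 0 < m)
    (κ : Kernel X (Fin m → Bool)) [IsMarkovKernel κ]
    (hκ : ∀ x, κ x = Measure.pi fun _ : Fin m =>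
      (PMF.bernoulli (Real.toNNReal (η x))
        (Real.toNNReal_le_one.mpr (hη01 x).2)).toMeasure)
    (c : ℝ) (hc : 0 < c)
    (hsep : ∀ᵐ x ∂μ, c ≤ |η x - 1 / 2|)
    (δ : ℝ) (hδ : δ ∈ Set.Ioo (0 : ℝ) 1) :
    let P : Measure (Fin n → X × (Fin m → Bool)) :=
      (Measure.pi fun _ : Fin n => μ.compProd κ);
    let etaHat : (Fin n → X × (Fin m → Bool)) → Fin n → ℝ :=
      (fun ω i => (∑ j : Fin m, if (ω i).2 j then (1 : ℝ) else 0) / m);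
    let betaHat : (Fin n → X × (Fin m → Bool)) → ℝ :=
      (fun ω => (∑ i : Fin n, min (etaHat ω i) (1 - etaHat ω i)) / n);
    let bayes : ℝ := (∫ x, min (η x) (1 - η x) ∂μ);
    ENNReal.ofReal (1 - δ) ≤
      P {ω | |betaHat ω - bayes| ≤
        Real.sqrt (Real.log (2 / δ) / (2 * (n : ℝ))) +
          (1 - 4 * c ^ 2) / (8 * c * (m : ℝ))} := by
  classical
  intro P etaHat betaHat bayes
  obtain ⟨hδ0, hδ1⟩ := hδ
  have hnR : (0:ℝ) < n := Nat.cast_pos.mpr hn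
  have hmR : (0:ℝ) < m := Nat.cast_pos.mpr hm
  set ν : Measure (X × (Fin m → Bool)) := μ.compProd κ with hν_def
  haveI : IsProbabilityMeasure ν := by rw [hν_def]; infer_instance
  set gm : (Fin m → Bool) → ℝ := fun b => (∑ j, if b j then (1:ℝ) else 0) / m with hgm_def
  set f : X × (Fin m → Bool) → ℝ := fun z => min (gm z.2) (1 - gm z.2) with hf_def
  have hgm_meas : Measurable gm := by
    apply Measurable.div_const
    exact Finset.measurable_sum _ fun j _ =>
      (measurable_of_countable (fun y : Bool => if y then (1:ℝ) else 0)).comp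
        (measurable_pi_apply j)
  have hgm01 : ∀ b, 0 ≤ gm b ∧ gm b ≤ 1 := by
    intro b
    constructor
    · apply div_nonneg _ hmR.le
      apply Finset.sum_nonneg
      intro j _; split_ifs <;> norm_num
    · rw [div_le_one hmR]
      calc (∑ j, if b j then (1:ℝ) else 0) ≤ ∑ _j : Fin m, (1:ℝ) := by
            apply Finset.sum_le_sum; intro j _; split_ifs <;> norm_num
        _ = m := by simp
  have hf_meas : Measurable f := by
    apply Measurable.min (hgm_meas.comp measurable_snd)
    exact measurable_const.sub (hgm_meas.comp measurable_snd)
  have hf01 : ∀ z, 0 ≤ f z ∧ f z ≤ 1/2 := by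
    intro z
    obtain ⟨h1, h2⟩ := hgm01 z.2
    constructor
    · exact le_min h1 (by linarith)
    · rcases min_le_iff.mpr (Or.inl (le_refl (gm z.2))) with h
      rcases le_total (gm z.2) (1/2) with h3 | h3
      · exact (min_le_left _ _).trans h3
      · exact (min_le_right _ _).trans (by linarith)
  have hf_bdd : ∀ z, |f z| ≤ 1/2 := fun z =>
    abs_le.mpr ⟨by linarith [(hf01 z).1], (hf01 z).2⟩
  have hf_int : Integrable f ν := integrable_of_bdd' hf_meas (1/2) hf_bdd
  set p0 : ℝ := ∫ z, f z ∂ν with hp0_def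
  set ε : ℝ := Real.sqrt (Real.log (2/δ) / (2 * (n:ℝ))) with hε_def
  set B : ℝ := (1 - 4 * c ^ 2) / (8 * c * (m:ℝ)) with hB_def
  have hlog : 0 ≤ Real.log (2/δ) := Real.log_nonneg (by
    rw [le_div_iff₀ hδ0]; linarith)
  have hε0 : 0 ≤ ε := Real.sqrt_nonneg _
  have hεsq : ε^2 = Real.log (2/δ) / (2 * (n:ℝ)) := by
    rw [hε_def, Real.sq_sqrt (div_nonneg hlog (by positivity))]
  -- kernel identification
  have hκx : ∀ x, κ x = piB' m (η x) (hη01 x).2 := fun x => hκ x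
  -- bias step
  set I : X → ℝ := fun x => ∫ b, f (x, b) ∂κ x with hI_def
  have hI_sm : StronglyMeasurable I := hf_meas.stronglyMeasurable.integral_kernel_prod_right'
  have hI_bdd : ∀ x, |I x| ≤ 1/2 := by
    intro x
    rw [hI_def]
    have h := norm_integral_le_of_norm_le_const (μ := κ x)
      (f := fun b => f (x, b)) (C := 1/2) (ae_of_all _ fun b => by
        rw [Real.norm_eq_abs]; exact hf_bdd _)
    rw [Real.norm_eq_abs] at h
    simpa using h
  have hI_int : Integrable I μ :=
    ⟨hI_sm.aestronglyMeasurable, HasFiniteIntegral.of_bounded (C := 1/2) (ae_of_all _ fun x => by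
      rw [Real.norm_eq_abs]; exact hI_bdd x)⟩
  have hmin_meas : Measurable (fun x => min (η x) (1 - η x)) :=
    hη.min (measurable_const.sub hη)
  have hmin_int : Integrable (fun x => min (η x) (1 - η x)) μ :=
    integrable_of_bdd' hmin_meas 1 (fun x => by
      obtain ⟨h1, h2⟩ := hη01 x
      rw [abs_le]
      constructor
      · refine le_trans (by norm_num) (le_min h1 (by linarith))
      · rcases le_total (η x) (1 - η x) with h3 | h3
        · rw [min_eq_left h3]; linarith
        · rw [min_eq_right h3]; linarith)
  have hp0_eq : p0 = ∫ x, I x ∂μ := by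
    rw [hp0_def, hν_def]
    exact Measure.integral_compProd hf_int
  have hae : ∀ᵐ x ∂μ, |I x - min (η x) (1 - η x)| ≤ B := by
    refine hsep.mono fun x hx => ?_
    have hb := bias_bound hm (hη01 x).1 (hη01 x).2 hc hx
    have heq : I x = ∫ b : Fin m → Bool, min ((∑ j, if b j then (1:ℝ) else 0) / m)
        (1 - (∑ j, if b j then (1:ℝ) else 0) / m) ∂(piB' m (η x) (hη01 x).2) := by
      rw [hI_def]
      simp only []
      rw [hκx x]
    rw [heq]
    exact hb
  have hbias : |p0 - bayes| ≤ B := by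
    have hdiff : p0 - bayes = ∫ x, (I x - min (η x) (1 - η x)) ∂μ := by
      rw [hp0_eq, integral_sub hI_int hmin_int]
    rw [hdiff]
    have h1 := norm_integral_le_integral_norm (μ := μ)
      (fun x => I x - min (η x) (1 - η x))
    rw [Real.norm_eq_abs] at h1
    simp_rw [Real.norm_eq_abs] at h1
    refine h1.trans ?_
    have h2 := integral_mono_ae ((hI_int.sub hmin_int).abs) (integrable_const B) hae
    simpa using h2
  -- concentration step
  have hp00 : 0 ≤ p0 := by
    rw [hp0_def]; exact integral_nonneg fun z => (hf01 z).1
  have hp05 : p0 ≤ 1/2 := by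
    rw [hp0_def]
    have := integral_mono hf_int (integrable_const (1/2 : ℝ)) (fun z => (hf01 z).2)
    simpa using this
  set W : Fin n → (Fin n → X × (Fin m → Bool)) → ℝ := fun i ω => f (ω i) with hW_def
  have hW_meas : ∀ i, Measurable (W i) := fun i => hf_meas.comp (measurable_pi_apply i)
  have hW_mean : ∀ i, ∫ ω, W i ω ∂P = p0 := by
    intro i
    have h := integral_eval_pi' (μs := fun _ : Fin n => ν) (i := i) (f := f)
      hf_meas.aestronglyMeasurable
    exact h
  set Y : Fin n → (Fin n → X × (Fin m → Bool)) → ℝ := fun i ω => W i ω - p0 with hY_def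
  have hY_meas : ∀ i, Measurable (Y i) := fun i => (hW_meas i).sub_const p0
  have hY_bdd : ∀ i ω, |Y i ω| ≤ 1/2 := by
    intro i ω
    rw [hY_def, abs_le]
    obtain ⟨h1, h2⟩ := hf01 (ω i)
    constructor <;> simp only [hW_def] <;> [linarith; linarith]
  have hindep : iIndepFun Y P := by
    have h := (iIndepFun_eval_pi' (fun _ : Fin n => ν)).comp
      (fun _ => fun z => f z - p0) (fun _ => hf_meas.sub_const p0)
    exact h
  have hmgf_each : ∀ i t, mgf (Y i) P t ≤ exp (t^2/8) := by
    intro i t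
    have h := mgf_bound P (hW_meas i) (fun ω => (hf01 (ω i)).1) (fun ω => (hf01 (ω i)).2) t
    rwa [hW_mean i] at h
  have hY_int_exp : ∀ i t, Integrable (fun ω => exp (t * Y i ω)) P := by
    intro i t
    refine integrable_of_bdd' (((hY_meas i).const_mul t).exp) (exp (|t|/2)) fun ω => ?_
    rw [abs_of_nonneg (exp_nonneg _)]
    apply exp_le_exp.mpr
    calc t * Y i ω ≤ |t * Y i ω| := le_abs_self _
      _ = |t| * |Y i ω| := abs_mul _ _
      _ ≤ |t| * (1/2) := mul_le_mul_of_nonneg_left (hY_bdd i ω) (abs_nonneg t)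
      _ = |t| / 2 := by ring
  have hmgf_S : ∀ t, mgf (∑ i, Y i) P t ≤ exp (n * t^2/8) := by
    intro t
    rw [iIndepFun.mgf_sum hindep hY_meas Finset.univ]
    calc (∏ _i : Fin n, mgf (Y _i) P t) ≤ ∏ _i : Fin n, exp (t^2/8) :=
          Finset.prod_le_prod (fun i _ => mgf_nonneg) (fun i _ => hmgf_each i t)
      _ = exp (t^2/8) ^ n := by rw [Finset.prod_const, Finset.card_univ, Fintype.card_fin]
      _ = exp (n * t^2/8) := by
          rw [← Real.exp_nat_mul]; ring_nf
  have hS_int : ∀ t, Integrable (fun ω => exp (t * (∑ i, Y i) ω)) P :=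
    fun t => iIndepFun.integrable_exp_mul_sum hindep hY_meas (fun i _ => hY_int_exp i t)
  have hexp_half : exp (-(4*ε) * ((n:ℝ)*ε)) * exp ((n:ℝ) * (4*ε)^2/8) = δ/2 := by
    rw [← Real.exp_add]
    have h1 : -(4*ε) * ((n:ℝ)*ε) + (n:ℝ) * (4*ε)^2/8 = -(2 * (n:ℝ) * ε^2) := by ring
    rw [h1, hεsq]
    have h2 : -(2 * (n:ℝ) * (Real.log (2/δ) / (2 * (n:ℝ)))) = -Real.log (2/δ) := by
      field_simp
    rw [h2, Real.exp_neg, Real.exp_log (by positivity), inv_div]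
  have hup : (P {ω | (n:ℝ)*ε ≤ (∑ i, Y i) ω}).toReal ≤ δ/2 := by
    have h := measure_ge_le_exp_mul_mgf (μ := P) (X := ∑ i, Y i) (t := 4*ε)
      ((n:ℝ)*ε) (by positivity) (hS_int _)
    refine h.trans ?_
    calc exp (-(4*ε) * ((n:ℝ)*ε)) * mgf (∑ i, Y i) P (4*ε)
        ≤ exp (-(4*ε) * ((n:ℝ)*ε)) * exp ((n:ℝ) * (4*ε)^2/8) :=
          mul_le_mul_of_nonneg_left (hmgf_S (4*ε)) (exp_nonneg _)
      _ = δ/2 := hexp_half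
  have hlow : (P {ω | (∑ i, Y i) ω ≤ -((n:ℝ)*ε)}).toReal ≤ δ/2 := by
    have h := measure_le_le_exp_mul_mgf (μ := P) (X := ∑ i, Y i) (t := -(4*ε))
      (-((n:ℝ)*ε)) (by linarith [mul_nonneg (by norm_num : (0:ℝ) ≤ 4) hε0]) (hS_int _)
    refine h.trans ?_
    calc exp (-(-(4*ε)) * (-((n:ℝ)*ε))) * mgf (∑ i, Y i) P (-(4*ε))
        ≤ exp (-(-(4*ε)) * (-((n:ℝ)*ε))) * exp ((n:ℝ) * (-(4*ε))^2/8) :=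
          mul_le_mul_of_nonneg_left (hmgf_S (-(4*ε))) (exp_nonneg _)
      _ = δ/2 := by
          rw [show -(-(4*ε)) * (-((n:ℝ)*ε)) = -(4*ε) * ((n:ℝ)*ε) by ring,
            show ((n:ℝ) * (-(4*ε))^2/8) = (n:ℝ) * (4*ε)^2/8 by ring]
          exact hexp_half
  -- combine
  set T : Set (Fin n → X × (Fin m → Bool)) := {ω | |betaHat ω - bayes| ≤ ε + B} with hT_def
  have hbetaHat_eq : ∀ ω, betaHat ω = (∑ i, W i ω) / n := fun ω => rfl
  have hbeta_meas : Measurable betaHat := by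
    have h : Measurable fun ω => (∑ i, W i ω) := Finset.measurable_sum _ fun i _ => hW_meas i
    have h2 : betaHat = fun ω => (∑ i, W i ω) / n := funext hbetaHat_eq
    rw [h2]
    exact h.div_const _
  have hT_meas : MeasurableSet T :=
    measurableSet_le ((hbeta_meas.sub_const bayes).abs) measurable_const
  have hSum_eq : ∀ ω, (∑ i, Y i) ω = (n:ℝ) * (betaHat ω - p0) := by
    intro ω
    rw [Finset.sum_apply, hbetaHat_eq ω]
    simp only [hY_def]
    rw [Finset.sum_sub_distrib, Finset.sum_const, Finset.card_univ, Fintype.card_fin,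
      nsmul_eq_mul]
    field_simp
  have hsubset : Tᶜ ⊆ {ω | (n:ℝ)*ε ≤ (∑ i, Y i) ω} ∪ {ω | (∑ i, Y i) ω ≤ -((n:ℝ)*ε)} := by
    intro ω hω
    have h1 : ε + B < |betaHat ω - bayes| := lt_of_not_ge hω
    have h2 : |betaHat ω - bayes| ≤ |betaHat ω - p0| + |p0 - bayes| := by
      have := abs_sub_le (betaHat ω) p0 bayes
      simpa using this
    have h3 : ε < |betaHat ω - p0| := by linarith [hbias]
    have h4 : (n:ℝ)*ε < |(∑ i, Y i) ω| := by
      rw [hSum_eq ω, abs_mul, abs_of_pos hnR]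
      exact mul_lt_mul_of_pos_left h3 hnR
    rcases lt_abs.mp h4 with h5 | h5
    · exact Or.inl (le_of_lt h5)
    · exact Or.inr (by simp only [Set.mem_setOf_eq]; linarith)
  have hA_meas : MeasurableSet {ω | (n:ℝ)*ε ≤ (∑ i, Y i) ω} := by
    have h : Measurable (∑ i, Y i) := by
      have h2 : (∑ i, Y i) = fun ω => ∑ i, Y i ω := by
        funext ω; rw [Finset.sum_apply]
      rw [h2]
      exact Finset.measurable_sum _ fun i _ => hY_meas i
    exact measurableSet_le measurable_const h
  have hcompl_le : P Tᶜ ≤ ENNReal.ofReal δ := by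
    refine le_trans (measure_mono hsubset) ?_
    refine le_trans (measure_union_le _ _) ?_
    have h1 : P {ω | (n:ℝ)*ε ≤ (∑ i, Y i) ω} ≤ ENNReal.ofReal (δ/2) := by
      rw [ENNReal.le_ofReal_iff_toReal_le (measure_ne_top _ _) (by positivity)]
      exact hup
    have h2 : P {ω | (∑ i, Y i) ω ≤ -((n:ℝ)*ε)} ≤ ENNReal.ofReal (δ/2) := by
      rw [ENNReal.le_ofReal_iff_toReal_le (measure_ne_top _ _) (by positivity)]
      exact hlow
    calc P {ω | (n:ℝ)*ε ≤ (∑ i, Y i) ω} + P {ω | (∑ i, Y i) ω ≤ -((n:ℝ)*ε)}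
        ≤ ENNReal.ofReal (δ/2) + ENNReal.ofReal (δ/2) := add_le_add h1 h2
      _ = ENNReal.ofReal δ := by
          rw [← ENNReal.ofReal_add (by positivity) (by positivity)]
          norm_num
  have hsum1 : P T + P Tᶜ = 1 := prob_add_prob_compl hT_meas
  have hPT : P T = 1 - P Tᶜ := ENNReal.eq_sub_of_add_eq (measure_ne_top _ _) hsum1
  rw [hPT]
  calc ENNReal.ofReal (1 - δ) = 1 - ENNReal.ofReal δ := by
        rw [ENNReal.ofReal_sub 1 hδ0.le, ENNReal.ofReal_one]
    _ ≤ 1 - P Tᶜ := tsub_le_tsub_left hcompl_le 1
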